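/- If A and B are real matrices then the Moore–Penrose pseudoinverse of their Kronecker product satisfies (A ⊗ B)^† = A^† ⊗ B^†. -/
import Mathlib


open Matrix Kronecker

/-- `P` is the Moore–Penrose pseudoinverse of `M`. -/
def IsMoorePenrose {m n : Type*} [Fintype m] [Fintype n]
    (M : Matrix m n ℝ) (P : Matrix n m ℝ) : Prop :=
  M * P * M = M ∧ P * M * P = P ∧ (M * P)ᵀ = M * P ∧ (P * M)ᵀ = P * M

theorem kronecker_pseudoinverse (m₁ n₁ m₂ n₂ : ℕ)
    (A : Matrix (Fin m₁) (Fin n₁) ℝ) (B : Matrix (Fin m₂) (Fin n₂) ℝ)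
    (P : Matrix (Fin n₁) (Fin m₁) ℝ) (Q : Matrix (Fin n₂) (Fin m₂) ℝ)
    (hP : IsMoorePenrose A P) (hQ : IsMoorePenrose B Q) :
    IsMoorePenrose (A ⊗ₖ B) (P ⊗ₖ Q) := by
  obtain ⟨h1, h2, h3, h4⟩ := hP
  obtain ⟨g1, g2, g3, g4⟩ := hQ
  refine ⟨?_, ?_, ?_, ?_⟩ <;>
    simp only [← Matrix.mul_kronecker_mul, ← Matrix.kroneckerMap_transpose,
      h1, h2, h3, h4, g1, g2, g3, g4]
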